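/- arXiv:1604.06038 — 2 statements merged into one kernel-verified Lean document; each statement's English description precedes it below -/
import Mathlib

section
/- Let A be a finite set with a strict linear order < and let s ⊆ < be a relation such that every element except the maximum has at least one s-successor and every element except the minimum has at least one s-predecessor, and every element has at most one s-successor and at most one s-predecessor. Starting from the minimum and repeatedly following s reaches the maximum, and the resulting s-path visits every element of A. -/
theorem stmt_12 {A : Type*} [Fintype A] [LinearOrder A]
    (hne : (Finset.univ : Finset A).Nonempty)
    (s : A → A → Prop)
    (hlt : ∀ x y, s x y → x < y)
    (hsucc : ∀ x, x ≠ Finset.univ.max' hne → ∃ y, s x y)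
    (hpred : ∀ y, y ≠ Finset.univ.min' hne → ∃ x, s x y)
    (hfun : ∀ x y z, s x y → s x z → y = z)
    (hinj : ∀ x y z, s x z → s y z → x = y) :
    ∃ (n : ℕ) (e : Fin (n + 1) → A),
      e 0 = Finset.univ.min' hne ∧
      e (Fin.last n) = Finset.univ.max' hne ∧
      (∀ i : Fin n, s (e i.castSucc) (e i.succ)) ∧
      Function.Surjective e := by
  classical
  set m := Fintype.card A with hm
  have hpos : 0 < m := Fintype.card_pos_iff.mpr ⟨hne.choose⟩
  let e : Fin m ≃o A := monoEquivOfFin A rfl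
  have hmin : Finset.univ.min' hne = e ⟨0, hpos⟩ := by
    apply le_antisymm
    · exact Finset.min'_le _ _ (Finset.mem_univ _)
    · apply Finset.le_min'
      intro y _
      obtain ⟨j, rfl⟩ := e.surjective y
      exact e.monotone (by simp [Fin.le_def])
  have hmax : Finset.univ.max' hne = e ⟨m - 1, Nat.sub_lt hpos one_pos⟩ := by
    apply le_antisymm
    · apply Finset.max'_le
      intro y _
      obtain ⟨j, rfl⟩ := e.surjective y
      exact e.monotone (by have := j.isLt; simp [Fin.le_def]; omega)
    · exact Finset.le_max' _ _ (Finset.mem_univ _)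
  have key : ∀ k : ℕ, ∀ hk : k + 1 < m,
      s (e ⟨k, Nat.lt_of_succ_lt hk⟩) (e ⟨k + 1, hk⟩) := by
    intro k
    induction k using Nat.strong_induction_on with
    | _ k IH =>
      intro hk
      have hymin : e ⟨k + 1, hk⟩ ≠ Finset.univ.min' hne := by
        rw [hmin]
        intro h
        have := e.injective h
        simp [Fin.ext_iff] at this
      obtain ⟨x, hx⟩ := hpred _ hymin
      obtain ⟨j, rfl⟩ := e.surjective x
      have hjk : (j : ℕ) < k + 1 := by
        have h1 := hlt _ _ hx
        have h2 : j < (⟨k + 1, hk⟩ : Fin _) := e.lt_iff_lt.mp h1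
        simpa [Fin.lt_iff_val_lt_val] using h2
      have hj : (j : ℕ) = k := by
        by_contra hne'
        have hjlt : (j : ℕ) < k := by omega
        have hj1 : (j : ℕ) + 1 < m := by omega
        have hs := IH j hjlt hj1
        have hjj : (⟨(j : ℕ), Nat.lt_of_succ_lt hj1⟩ : Fin m) = j := by
          simp
        rw [hjj] at hs
        have := hfun _ _ _ hs hx
        have := e.injective this
        simp [Fin.ext_iff] at this
        omega
      have : j = ⟨k, Nat.lt_of_succ_lt hk⟩ := Fin.ext hj
      rwa [this] at hx
  refine ⟨m - 1, fun i => e (Fin.cast (by omega) i), ?_, ?_, ?_, ?_⟩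
  · rw [hmin]; rfl
  · rw [hmax]; rfl
  · intro i
    have hk : (i : ℕ) + 1 < m := by omega
    have := key i hk
    convert this using 2 <;> simp [Fin.ext_iff]
  · intro a
    obtain ⟨j, rfl⟩ := e.surjective a
    exact ⟨Fin.cast (by omega) j, by simp⟩
end

section
/- Let k ≥ 1 and let σ_1, ..., σ_k be a sequence of tuples σ_i = (P_i, c_i, S_i, L_i, G_i) where P_i, S_i are multisets of size at most 1 over a finite set Π, c_i ∈ Π, and L_i, G_i are multisets over Π (values in a truncated commutative monoid ℕ_c), satisfying the edge condition: for each i < k, P_{i+1} = {c_i}, c_{i+1} is the element of S_i (so S_i is a singleton), L_{i+1} = L_i ∪ P_i, and G_i = G_{i+1} ∪ S_{i+1}. Suppose also L_1 = ∅, P_1 = ∅, G_k = ∅, S_k = ∅. Then for every i, L_i equals the ℕ_c-truncated multiset {c_1, ..., c_{i-2}} (all elements strictly before the predecessor) and G_i equals the truncated multiset {c_{i+2}, ..., c_k}. -/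
/-- Truncation of an extended natural number at `c`. -/
def cutc (c : ℕ) (x : ℕ∞) : ℕ∞ := if x ≤ (c : ℕ∞) then x else ⊤

/-- Multiplicity of `p` in a multiset of size at most one (an `Option`). -/
def optCount {Pi : Type*} [DecidableEq Pi] (o : Option Pi) (p : Pi) : ℕ∞ :=
  if o = some p then 1 else 0

lemma cutc_zero (c : ℕ) : cutc c 0 = 0 := by simp [cutc]

lemma cutc_cutc_add (c : ℕ) (a b : ℕ∞) : cutc c (cutc c a + b) = cutc c (a + b) := by
  by_cases h : a ≤ (c : ℕ∞)
  · simp [cutc, h]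
  · have h1 : cutc c a = ⊤ := by simp [cutc, h]
    have h2 : ¬ (a + b ≤ (c : ℕ∞)) := fun hh => h (le_trans le_self_add hh)
    rw [h1]
    simp [cutc, h2]

lemma aux_card {Pi : Type*} [DecidableEq Pi] {N : ℕ} (cs : Fin N → Pi) (p : Pi)
    (a : Fin N) (f g : Fin N → Prop) [DecidablePred f] [DecidablePred g]
    (hsplit : ∀ j, f j ↔ g j ∨ j = a) (hng : ¬ g a) :
    (Finset.univ.filter (fun j => f j ∧ cs j = p)).card =
      (Finset.univ.filter (fun j => g j ∧ cs j = p)).card +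
        (if cs a = p then 1 else 0) := by
  classical
  rw [Finset.card_filter, Finset.card_filter]
  have h2 : (if cs a = p then 1 else 0) =
      ∑ j : Fin N, if j = a ∧ cs j = p then 1 else 0 := by
    simp [ite_and, Finset.sum_ite_eq']
  rw [h2, ← Finset.sum_add_distrib]
  apply Finset.sum_congr rfl
  intro j _
  by_cases hq : cs j = p <;> by_cases hja : j = a <;>
    simp_all [hsplit j]

theorem stmt_16 {Pi : Type*} [Fintype Pi] [DecidableEq Pi] (c k : ℕ)
    (P S : Fin (k + 1) → Option Pi) (cs : Fin (k + 1) → Pi)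
    (L G : Fin (k + 1) → Pi → ℕ∞)
    -- edge conditions along the path
    (hedge : ∀ i : Fin k,
      P i.succ = some (cs i.castSucc) ∧
      S i.castSucc = some (cs i.succ) ∧
      (∀ p, L i.succ p = cutc c (L i.castSucc p + optCount (P i.castSucc) p)) ∧
      (∀ p, G i.castSucc p = cutc c (G i.succ p + optCount (S i.succ) p)))
    -- boundary conditions: source node and target node
    (hL0 : ∀ p, L 0 p = 0) (hP0 : P 0 = none)
    (hGk : ∀ p, G (Fin.last k) p = 0) (hSk : S (Fin.last k) = none) :
    ∀ (i : Fin (k + 1)) (p : Pi),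
      L i p = cutc c
        ((Finset.univ.filter (fun j : Fin (k + 1) => (j : ℕ) + 1 < (i : ℕ) ∧ cs j = p)).card
          : ℕ∞) ∧
      G i p = cutc c
        ((Finset.univ.filter (fun j : Fin (k + 1) => (i : ℕ) + 1 < (j : ℕ) ∧ cs j = p)).card
          : ℕ∞) := by
  have hLall : ∀ n (h : n < k + 1) (p : Pi),
      L ⟨n, h⟩ p = cutc c
        (((Finset.univ.filter (fun j : Fin (k + 1) => (j : ℕ) + 1 < n ∧ cs j = p)).card : ℕ∞)) := by
    intro n
    induction n with
    | zero =>
      intro h p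
      have h0 : (⟨0, h⟩ : Fin (k + 1)) = 0 := rfl
      rw [h0, hL0]
      simp [cutc_zero]
    | succ n ih =>
      intro h p
      have hn : n < k := Nat.lt_of_succ_lt_succ h
      have hL := (hedge ⟨n, hn⟩).2.2.1 p
      have e1 : (⟨n, hn⟩ : Fin k).succ = (⟨n + 1, h⟩ : Fin (k + 1)) := rfl
      have e2 : (⟨n, hn⟩ : Fin k).castSucc = (⟨n, by omega⟩ : Fin (k + 1)) := rfl
      rw [e1, e2] at hL
      rw [hL, ih (by omega) p, cutc_cutc_add]
      congr 1
      cases n with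
      | zero =>
        have h0 : (⟨0, by omega⟩ : Fin (k + 1)) = 0 := rfl
        rw [h0, hP0]
        simp [optCount]
      | succ m =>
        have hm : m < k := by omega
        have hP := (hedge ⟨m, hm⟩).1
        have e3 : (⟨m, hm⟩ : Fin k).succ = (⟨m + 1, by omega⟩ : Fin (k + 1)) := rfl
        have e4 : (⟨m, hm⟩ : Fin k).castSucc = (⟨m, by omega⟩ : Fin (k + 1)) := rfl
        rw [e3, e4] at hP
        rw [hP]
        have hcard := aux_card cs p (⟨m, by omega⟩ : Fin (k + 1))
          (fun j => (j : ℕ) + 1 < m + 2) (fun j => (j : ℕ) + 1 < m + 1)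
          (by intro j; rw [Fin.ext_iff]; simp; omega) (by simp)
        rw [hcard]
        push_cast
        simp [optCount]
  have hGall : ∀ d n (h : n < k + 1), n + d = k → ∀ p : Pi,
      G ⟨n, h⟩ p = cutc c
        (((Finset.univ.filter (fun j : Fin (k + 1) => n + 1 < (j : ℕ) ∧ cs j = p)).card : ℕ∞)) := by
    intro d
    induction d with
    | zero =>
      intro n h hnk p
      have hn : n = k := by omega
      have h0 : (⟨n, h⟩ : Fin (k + 1)) = Fin.last k := by
        rw [Fin.ext_iff]; simp [hn]
      rw [h0, hGk]
      have : (Finset.univ.filter (fun j : Fin (k + 1) => n + 1 < (j : ℕ) ∧ cs j = p)) = ∅ := by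
        apply Finset.filter_false_of_mem
        intro j _
        have := j.isLt
        omega
      rw [this]
      simp [cutc_zero]
    | succ e ih =>
      intro n h hnk p
      have hn : n < k := by omega
      have hG := (hedge ⟨n, hn⟩).2.2.2 p
      have e1 : (⟨n, hn⟩ : Fin k).succ = (⟨n + 1, by omega⟩ : Fin (k + 1)) := rfl
      have e2 : (⟨n, hn⟩ : Fin k).castSucc = (⟨n, h⟩ : Fin (k + 1)) := rfl
      rw [e1, e2] at hG
      rw [hG, ih (n + 1) (by omega) (by omega) p, cutc_cutc_add]
      congr 1
      match e, hnk with
      | 0, hnk =>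
        have hlast : (⟨n + 1, by omega⟩ : Fin (k + 1)) = Fin.last k := by
          rw [Fin.ext_iff]; simp; omega
        rw [hlast, hSk]
        have hempty : ∀ m, n ≤ m → (Finset.univ.filter (fun j : Fin (k + 1) => m + 1 < (j : ℕ) ∧ cs j = p)) = ∅ := by
          intro m hm
          apply Finset.filter_false_of_mem
          intro j _
          have := j.isLt
          omega
        rw [hempty n le_rfl, hempty (n + 1) (by omega)]
        simp [optCount]
      | f + 1, hnk =>
        have hm : n + 1 < k := by omega
        have hS := (hedge ⟨n + 1, hm⟩).2.1
        have e3 : (⟨n + 1, hm⟩ : Fin k).succ = (⟨n + 2, by omega⟩ : Fin (k + 1)) := rfl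
        have e4 : (⟨n + 1, hm⟩ : Fin k).castSucc = (⟨n + 1, by omega⟩ : Fin (k + 1)) := rfl
        rw [e3, e4] at hS
        rw [hS]
        have hcard := aux_card cs p (⟨n + 2, by omega⟩ : Fin (k + 1))
          (fun j => n + 1 < (j : ℕ)) (fun j => n + 2 < (j : ℕ))
          (by intro j; rw [Fin.ext_iff]; simp; omega) (by simp)
        rw [hcard]
        push_cast
        simp [optCount]
  intro i p
  constructor
  · exact hLall i.1 i.isLt p
  · have := hGall (k - i.1) i.1 i.isLt (by omega) p
    exact this
end
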